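/- Let P be tame and Q(t) = ∑ q_n t^n a power series whose radius of convergence r_Q satisfies r_Q > R_P := 1/liminf |γ_n|^{1/n}. Then P + Q is tame and Ω(P + Q) = Ω(P). -/

import Mathlib

open Filter
open Topology

/-- Tameness of a coefficient sequence: `γ n ≠ 0` and `u ≤ |γ (n-1) / γ n| ≤ v`
    for all `n ≥ N`. -/
def Tame (γ : ℕ → ℂ) (u v : ℝ) (N : ℕ) : Prop :=
  0 < u ∧ 0 < v ∧ (∀ n ≥ N, γ n ≠ 0) ∧
    ∀ n ≥ N + 1, u ≤ ‖γ (n - 1) / γ n‖ ∧ ‖γ (n - 1) / γ n‖ ≤ v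

/-- The opposite polynomial `X_n(P) = ∑_{k=0}^n (γ_{n-k}/γ_n) s^k`, viewed as its
    coefficient sequence in `ℂ[[s]] ≅ (ℕ → ℂ)` with the product topology. -/
noncomputable def oppPoly (γ : ℕ → ℂ) (n : ℕ) : ℕ → ℂ :=
  fun k => if k ≤ n then γ (n - k) / γ n else 0

/-- The space `Ω(P)` of opposite series: the set of cluster points of the sequence
    of opposite polynomials in the coefficientwise (product) topology. -/
def OmegaP (γ : ℕ → ℂ) : Set (ℕ → ℂ) :=
  {a | MapClusterPt a atTop (oppPoly γ)}

lemma my_mapClusterPt_congr {X : Type*} [TopologicalSpace X] [AddCommGroup X]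
    [IsTopologicalAddGroup X] [FirstCountableTopology X] {f g : ℕ → X}
    (h : Tendsto (fun n => g n - f n) atTop (𝓝 0)) {a : X}
    (ha : MapClusterPt a atTop f) : MapClusterPt a atTop g := by
  obtain ⟨ψ, hmono, hψ⟩ := TopologicalSpace.FirstCountableTopology.tendsto_subseq ha
  have h2 : Tendsto (fun n => g (ψ n) - f (ψ n)) atTop (𝓝 0) :=
    h.comp hmono.tendsto_atTop
  have h3 : Tendsto (g ∘ ψ) atTop (𝓝 a) := by
    have := hψ.add h2
    simpa [Function.comp_def] using this
  exact MapClusterPt.of_comp hmono.tendsto_atTop h3.mapClusterPt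

lemma my_root_tendsto {K : ℝ} (hK : 0 < K) :
    Tendsto (fun n : ℕ => K ^ (1 / (n : ℝ))) atTop (𝓝 1) := by
  have heq : (fun n : ℕ => K ^ (1 / (n : ℝ)))
      = fun n : ℕ => Real.exp (Real.log K * (1 / (n : ℝ))) := by
    funext n; rw [Real.rpow_def_of_pos hK]
  rw [heq]
  have h1 : Tendsto (fun n : ℕ => Real.log K * (1 / (n : ℝ))) atTop (𝓝 0) := by
    simpa using tendsto_const_nhds.mul (tendsto_one_div_atTop_nhds_zero_nat (𝕜 := ℝ))
  simpa [Function.comp_def] using (Real.continuous_exp.continuousAt (x := 0)).tendsto.comp h1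

/-- Stability of `Ω(P)`: adding a power series `Q` whose radius of convergence
    exceeds `R_P = 1/liminf |γ_n|^{1/n}` does not change tameness nor `Ω(P)`. -/
theorem omega_stability (γ q : ℕ → ℂ) (u v : ℝ) (N : ℕ) (h : Tame γ u v N)
    (c : ℝ) (hc : 1 / Filter.liminf (fun n => ‖γ n‖ ^ (1 / (n : ℝ))) atTop < c)
    (hq : Summable (fun n => ‖q n‖ * c ^ n)) :
    (∃ u' v' : ℝ, ∃ N' : ℕ, Tame (fun n => γ n + q n) u' v' N') ∧
      OmegaP (fun n => γ n + q n) = OmegaP γ := by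
  obtain ⟨hu, hv, hne, hrat⟩ := h
  have hγN : 0 < ‖γ N‖ := norm_pos_iff.mpr (hne N le_rfl)
  -- lower and upper geometric bounds on ‖γ n‖
  have low : ∀ m : ℕ, ‖γ N‖ * v⁻¹ ^ m ≤ ‖γ (N + m)‖ := by
    intro m
    induction m with
    | zero => simp
    | succ m ih =>
      have hr := (hrat (N + m + 1) (by omega)).2
      have hpos : 0 < ‖γ (N + m + 1)‖ := norm_pos_iff.mpr (hne _ (by omega))
      rw [norm_div, show N + m + 1 - 1 = N + m from by omega] at hr
      have h1 : ‖γ (N + m)‖ ≤ v * ‖γ (N + m + 1)‖ := by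
        rw [div_le_iff₀ hpos] at hr; linarith
      have h2 : ‖γ N‖ * v⁻¹ ^ m ≤ v * ‖γ (N + m + 1)‖ := le_trans ih h1
      rw [pow_succ]
      calc ‖γ N‖ * (v⁻¹ ^ m * v⁻¹) = (‖γ N‖ * v⁻¹ ^ m) * v⁻¹ := by ring
        _ ≤ (v * ‖γ (N + m + 1)‖) * v⁻¹ :=
            mul_le_mul_of_nonneg_right h2 (by positivity)
        _ = ‖γ (N + m + 1)‖ := by field_simp
  have high : ∀ m : ℕ, ‖γ (N + m)‖ ≤ ‖γ N‖ * u⁻¹ ^ m := by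
    intro m
    induction m with
    | zero => simp
    | succ m ih =>
      have hr := (hrat (N + m + 1) (by omega)).1
      have hpos : 0 < ‖γ (N + m + 1)‖ := norm_pos_iff.mpr (hne _ (by omega))
      rw [norm_div, show N + m + 1 - 1 = N + m from by omega] at hr
      have h1 : u * ‖γ (N + m + 1)‖ ≤ ‖γ (N + m)‖ := by
        rw [le_div_iff₀ hpos] at hr; linarith
      have h2 : u * ‖γ (N + m + 1)‖ ≤ ‖γ N‖ * u⁻¹ ^ m := le_trans h1 ih
      rw [pow_succ]
      calc ‖γ (N + m + 1)‖ = (u * ‖γ (N + m + 1)‖) * u⁻¹ := by field_simp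
        _ ≤ (‖γ N‖ * u⁻¹ ^ m) * u⁻¹ :=
            mul_le_mul_of_nonneg_right h2 (by positivity)
        _ = ‖γ N‖ * (u⁻¹ ^ m * u⁻¹) := by ring
  set C : ℝ := ‖γ N‖ * v ^ N with hC
  set B : ℝ := ‖γ N‖ * u ^ N with hB
  have hCpos : 0 < C := by positivity
  have hBpos : 0 < B := by positivity
  have lowN : ∀ n, N ≤ n → C * v⁻¹ ^ n ≤ ‖γ n‖ := by
    intro n hn
    have := low (n - N)
    rw [show N + (n - N) = n from by omega] at this
    refine le_trans (le_of_eq ?_) this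
    rw [hC, show n = (n - N) + N from by omega, pow_add]
    rw [show n - N + N - N = n - N from by omega]
    field_simp
    rw [← mul_pow, mul_one_div_cancel hv.ne', one_pow]
  have highN : ∀ n, N ≤ n → ‖γ n‖ ≤ B * u⁻¹ ^ n := by
    intro n hn
    have := high (n - N)
    rw [show N + (n - N) = n from by omega] at this
    refine le_trans this (le_of_eq ?_)
    rw [hB, show n = (n - N) + N from by omega, pow_add]
    rw [show n - N + N - N = n - N from by omega]
    field_simp
    rw [← mul_pow, mul_one_div_cancel hu.ne', one_pow]
  -- root sequence bounds
  have rlow : ∀ n, N ≤ n → 1 ≤ n → C ^ (1 / (n : ℝ)) * v⁻¹ ≤ ‖γ n‖ ^ (1 / (n : ℝ)) := by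
    intro n hn hn1
    have h1 := Real.rpow_le_rpow (by positivity) (lowN n hn) (by positivity : (0:ℝ) ≤ 1 / (n:ℝ))
    rw [Real.mul_rpow hCpos.le (by positivity)] at h1
    rw [one_div] at h1 ⊢
    rwa [Real.pow_rpow_inv_natCast (by positivity : (0:ℝ) ≤ v⁻¹) (by omega : n ≠ 0)] at h1
  have rhigh : ∀ n, N ≤ n → 1 ≤ n → ‖γ n‖ ^ (1 / (n : ℝ)) ≤ B ^ (1 / (n : ℝ)) * u⁻¹ := by
    intro n hn hn1
    have h1 := Real.rpow_le_rpow (norm_nonneg _) (highN n hn) (by positivity : (0:ℝ) ≤ 1 / (n:ℝ))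
    rw [Real.mul_rpow hBpos.le (by positivity)] at h1
    rw [one_div] at h1 ⊢
    rwa [Real.pow_rpow_inv_natCast (by positivity : (0:ℝ) ≤ u⁻¹) (by omega : n ≠ 0)] at h1
  -- coboundedness and positivity of the liminf
  have hub2 : ∀ᶠ n in atTop, ‖γ n‖ ^ (1 / (n : ℝ)) ≤ 2 * u⁻¹ := by
    filter_upwards [eventually_ge_atTop N, eventually_ge_atTop 1,
      (my_root_tendsto hBpos).eventually (eventually_le_nhds one_lt_two)] with n h1 h2 h3
    calc ‖γ n‖ ^ (1 / (n : ℝ)) ≤ B ^ (1 / (n : ℝ)) * u⁻¹ := rhigh n h1 h2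
      _ ≤ 2 * u⁻¹ := mul_le_mul_of_nonneg_right h3 (by positivity)
  have hcob : IsCoboundedUnder (· ≥ ·) atTop (fun n : ℕ => ‖γ n‖ ^ (1 / (n : ℝ))) :=
    isCoboundedUnder_ge_of_eventually_le atTop hub2
  have hlb2 : ∀ᶠ n in atTop, 2⁻¹ * v⁻¹ ≤ ‖γ n‖ ^ (1 / (n : ℝ)) := by
    filter_upwards [eventually_ge_atTop N, eventually_ge_atTop 1,
      (my_root_tendsto hCpos).eventually (eventually_ge_nhds (by norm_num : (2⁻¹:ℝ) < 1))]
      with n h1 h2 h3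
    calc (2⁻¹ : ℝ) * v⁻¹ ≤ C ^ (1 / (n : ℝ)) * v⁻¹ :=
          mul_le_mul_of_nonneg_right h3 (by positivity)
      _ ≤ ‖γ n‖ ^ (1 / (n : ℝ)) := rlow n h1 h2
  set L := Filter.liminf (fun n => ‖γ n‖ ^ (1 / (n : ℝ))) atTop with hLdef
  have hL : 2⁻¹ * v⁻¹ ≤ L := le_liminf_of_le hcob hlb2
  have hLpos : 0 < L := lt_of_lt_of_le (by positivity) hL
  have hc0 : 0 < c := lt_trans (by positivity : (0:ℝ) < 1 / L) hc
  have h1c : 1 / c < L := by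
    rw [div_lt_iff₀ hLpos] at hc
    rw [div_lt_iff₀ hc0]
    nlinarith
  have hbdd : IsBoundedUnder (· ≥ ·) atTop (fun n : ℕ => ‖γ n‖ ^ (1 / (n : ℝ))) :=
    isBoundedUnder_of ⟨0, fun n => Real.rpow_nonneg (norm_nonneg _) _⟩
  have heven : ∀ᶠ n in atTop, 1 / c < ‖γ n‖ ^ (1 / (n : ℝ)) :=
    eventually_lt_of_lt_liminf h1c hbdd
  -- eventually ‖γ n‖ beats c⁻¹ ^ n
  have hγbig : ∀ᶠ n : ℕ in atTop, c⁻¹ ^ n < ‖γ n‖ := by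
    filter_upwards [heven, eventually_ge_atTop 1] with n h1 hn1
    have h2 : (1 / c) ^ n < (‖γ n‖ ^ (1 / (n : ℝ))) ^ n :=
      pow_lt_pow_left₀ h1 (by positivity) (by omega)
    rwa [one_div, one_div, Real.rpow_inv_natCast_pow (norm_nonneg _) (by omega)] at h2
  -- ε n := q n / γ n → 0
  have hε : Tendsto (fun n => q n / γ n) atTop (𝓝 (0 : ℂ)) := by
    rw [tendsto_zero_iff_norm_tendsto_zero]
    refine squeeze_zero' (Eventually.of_forall fun n => norm_nonneg _) ?_ hq.tendsto_atTop_zero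
    filter_upwards [hγbig] with n hn
    have hγpos : 0 < ‖γ n‖ := lt_of_le_of_lt (by positivity) hn
    rw [norm_div, div_le_iff₀ hγpos]
    have hcc : c ^ n * c⁻¹ ^ n = 1 := by
      rw [← mul_pow, mul_inv_cancel₀ hc0.ne', one_pow]
    have h2 : (1:ℝ) ≤ c ^ n * ‖γ n‖ := by
      calc (1:ℝ) = c ^ n * c⁻¹ ^ n := hcc.symm
        _ ≤ c ^ n * ‖γ n‖ := mul_le_mul_of_nonneg_left hn.le (by positivity)
    have := mul_le_mul_of_nonneg_left h2 (norm_nonneg (q n))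
    calc ‖q n‖ = ‖q n‖ * 1 := by ring
      _ ≤ ‖q n‖ * (c ^ n * ‖γ n‖) := this
      _ = ‖q n‖ * c ^ n * ‖γ n‖ := by ring
  have hhalf : ∀ᶠ n in atTop, ‖q n / γ n‖ ≤ 1 / 2 := by
    have hn0 : Tendsto (fun n => ‖q n / γ n‖) atTop (𝓝 (0:ℝ)) := by
      simpa using hε.norm
    exact hn0.eventually (eventually_le_nhds (by norm_num : (0:ℝ) < 1 / 2))
  obtain ⟨M, hM⟩ := eventually_atTop.mp hhalf
  set P := max N M with hP
  -- key facts for n ≥ P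
  have key : ∀ n, P ≤ n → γ n + q n = γ n * (1 + q n / γ n) ∧
      (1:ℝ)/2 ≤ ‖1 + q n / γ n‖ ∧ ‖1 + q n / γ n‖ ≤ 3/2 := by
    intro n hn
    have hγ : γ n ≠ 0 := hne n (le_trans (le_max_left _ _) hn)
    have hq2 : ‖q n / γ n‖ ≤ 1 / 2 := hM n (le_trans (le_max_right _ _) hn)
    refine ⟨by field_simp, ?_, ?_⟩
    · have h1 := norm_add_le (1 + q n / γ n) (-(q n / γ n))
      simp only [add_neg_cancel_right, norm_neg, norm_one] at h1
      linarith
    · have h1 := norm_add_le (1 : ℂ) (q n / γ n)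
      simp only [norm_one] at h1
      linarith
  have knz : ∀ n, P ≤ n → γ n + q n ≠ 0 := by
    intro n hn
    obtain ⟨he, hl, _⟩ := key n hn
    rw [he]
    refine mul_ne_zero (hne n (le_trans (le_max_left _ _) hn)) ?_
    intro h0
    rw [h0] at hl
    simp at hl
    linarith
  constructor
  · -- tameness of γ + q
    refine ⟨u/3, 3*v, P, by positivity, by positivity, fun n hn => knz n hn, ?_⟩
    intro n hn
    have hn1 : P ≤ n - 1 := by omega
    have hnP : P ≤ n := by omega
    obtain ⟨he1, hl1, hr1⟩ := key (n - 1) hn1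
    obtain ⟨he2, hl2, hr2⟩ := key n hnP
    have hd : (γ (n-1) + q (n-1)) / (γ n + q n)
        = (γ (n-1) / γ n) * ((1 + q (n-1) / γ (n-1)) / (1 + q n / γ n)) := by
      rw [he1, he2, mul_div_mul_comm]
    obtain ⟨hu1, hv1⟩ := hrat n (by omega)
    have hbpos : 0 < ‖1 + q n / γ n‖ := by linarith
    have hs1 : (1:ℝ)/3 ≤ ‖1 + q (n-1) / γ (n-1)‖ / ‖1 + q n / γ n‖ := by
      rw [le_div_iff₀ hbpos]; nlinarith
    have hs3 : ‖1 + q (n-1) / γ (n-1)‖ / ‖1 + q n / γ n‖ ≤ 3 := by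
      rw [div_le_iff₀ hbpos]; nlinarith
    show u/3 ≤ ‖(γ (n-1) + q (n-1)) / (γ n + q n)‖ ∧
        ‖(γ (n-1) + q (n-1)) / (γ n + q n)‖ ≤ 3*v
    rw [hd, norm_mul, norm_div (1 + q (n-1) / γ (n-1))]
    constructor
    · calc u/3 = u * (1/3) := by ring
        _ ≤ ‖γ (n-1) / γ n‖ * (‖1 + q (n-1) / γ (n-1)‖ / ‖1 + q n / γ n‖) :=
            mul_le_mul hu1 hs1 (by norm_num) (le_trans hu.le hu1)
    · calc ‖γ (n-1) / γ n‖ * (‖1 + q (n-1) / γ (n-1)‖ / ‖1 + q n / γ n‖) ≤ v * 3 :=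
            mul_le_mul hv1 hs3 (div_nonneg (norm_nonneg _) (norm_nonneg _)) hv.le
        _ = 3 * v := by ring
  · -- Ω equality
    have hbound : ∀ j, ∀ n, N + j ≤ n → ‖γ (n - j) / γ n‖ ≤ v ^ j := by
      intro j
      induction j with
      | zero =>
        intro n hn
        simp only [Nat.sub_zero, pow_zero]
        rw [div_self (hne n (by omega)), norm_one]
      | succ j ih =>
        intro n hn
        have hnz : γ (n - j) ≠ 0 := hne _ (by omega)
        have hnz2 : γ n ≠ 0 := hne _ (by omega)
        have heq : γ (n - (j+1)) / γ n = (γ (n - j - 1) / γ (n - j)) * (γ (n - j) / γ n) := by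
          rw [show n - (j+1) = n - j - 1 from by omega]
          field_simp
        rw [heq, norm_mul, pow_succ, mul_comm (v ^ j) v]
        have h1 := (hrat (n - j) (by omega)).2
        have h2 := ih n (by omega)
        exact mul_le_mul h1 h2 (norm_nonneg _) hv.le
    have hδ : Tendsto (fun n => oppPoly (fun m => γ m + q m) n - oppPoly γ n)
        atTop (𝓝 (0 : ℕ → ℂ)) := by
      rw [tendsto_pi_nhds]
      intro k
      simp only [Pi.sub_apply, Pi.zero_apply]
      have hratio : Tendsto
          (fun n => (1 + q (n - k) / γ (n - k)) / (1 + q n / γ n) - 1) atTop (𝓝 (0:ℂ)) := by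
        have h1 : Tendsto (fun n : ℕ => 1 + q (n - k) / γ (n - k)) atTop (𝓝 (1:ℂ)) := by
          have := hε.comp (tendsto_sub_atTop_nat k)
          simpa using tendsto_const_nhds.add this
        have h2 : Tendsto (fun n : ℕ => 1 + q n / γ n) atTop (𝓝 (1:ℂ)) := by
          simpa using tendsto_const_nhds.add hε
        have h3 := h1.div h2 one_ne_zero
        have h4 := h3.sub_const 1
        simpa using h4
      rw [tendsto_zero_iff_norm_tendsto_zero]
      refine squeeze_zero' (Eventually.of_forall fun n => norm_nonneg _) ?_
        (g := fun n => v ^ k * ‖(1 + q (n - k) / γ (n - k)) / (1 + q n / γ n) - 1‖) ?_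
      · filter_upwards [eventually_ge_atTop (P + k), eventually_ge_atTop (N + k)] with n hn hNn
        have hkn : k ≤ n := by omega
        have hPk : P ≤ n - k := by omega
        have hPn : P ≤ n := by omega
        obtain ⟨he1, _, _⟩ := key (n - k) hPk
        obtain ⟨he2, _, _⟩ := key n hPn
        have hval : oppPoly (fun m => γ m + q m) n k - oppPoly γ n k
            = (γ (n - k) / γ n) *
              ((1 + q (n - k) / γ (n - k)) / (1 + q n / γ n) - 1) := by
          simp only [oppPoly, if_pos hkn]
          rw [he1, he2, mul_div_mul_comm]
          ring
        rw [hval, norm_mul]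
        exact mul_le_mul_of_nonneg_right (hbound k n hNn) (norm_nonneg _)
      · simpa using tendsto_const_nhds.mul hratio.norm
    ext a
    simp only [OmegaP, Set.mem_setOf_eq]
    constructor
    · intro ha
      refine my_mapClusterPt_congr ?_ ha
      simpa using hδ.neg
    · intro ha
      exact my_mapClusterPt_congr hδ ha
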